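/- Let d ≥ 1 be fixed and p > 4d be prime. Let λ_k := (1/d)Σ_{j=1}^d cos(2πk_j/p) for k ∈ ℤ_p^d be the eigenvalues of the standard transition matrix of the torus ℤ_p^d. If λ_k = λ_l for k, l ∈ ℤ_p^d, then l is obtained from k by a permutation of coordinates together with sign changes of coordinates. -/

import Mathlib

open Finset


open Finset Polynomial in
theorem aux_indep {p : ℕ} [NeZero p] (hp : p.Prime) {ζ : ℂ} (hζ : IsPrimitiveRoot ζ p)
    (f : ZMod p → ℤ) (hsum : ∑ a : ZMod p, f a = 0)
    (hvan : ∑ a : ZMod p, (f a : ℂ) * ζ ^ (a.val) = 0) : ∀ a, f a = 0 := by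
  haveI : Fact p.Prime := ⟨hp⟩
  set P : ℚ[X] := ∑ a : ZMod p, C (f a : ℚ) * X ^ (a.val) with hP
  have hcoeff : ∀ b : ZMod p, P.coeff b.val = (f b : ℚ) := by
    intro b
    rw [hP, finset_sum_coeff]
    rw [Finset.sum_eq_single b]
    · simp
    · intro a _ hab
      rw [coeff_C_mul, coeff_X_pow, if_neg, mul_zero]
      exact fun h => hab (ZMod.val_injective p h.symm)
    · simp
  have haev : aeval ζ P = 0 := by
    rw [hP, map_sum, ← hvan]
    congr 1; ext a
    simp
  have hdvd : cyclotomic p ℚ ∣ P := by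
    rw [cyclotomic_eq_minpoly_rat hζ hp.pos]
    exact minpoly.dvd ℚ ζ haev
  have hdeg : P.natDegree ≤ p - 1 := by
    rw [hP]
    refine natDegree_sum_le_of_forall_le _ _ ?_
    intro a _
    refine (natDegree_C_mul_le _ _).trans ?_
    rw [natDegree_X_pow]
    have := a.val_lt
    omega
  -- All coefficients of P at exponents b.val are equal to some constant c
  have key : ∀ b : ZMod p, (f b : ℚ) = (f 0 : ℚ) := by
    by_cases hP0 : P = 0
    · intro b
      have h1 := hcoeff b
      have h2 := hcoeff 0
      rw [hP0] at h1 h2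
      simp at h1 h2
      rw [← h1, ← h2]
    · obtain ⟨q, hq⟩ := hdvd
      have hq0 : q ≠ 0 := by rintro rfl; simp at hq; exact hP0 hq
      have hdegc : (cyclotomic p ℚ).natDegree = p - 1 := by
        rw [natDegree_cyclotomic, Nat.totient_prime hp]
      have hdq : q.natDegree = 0 := by
        have := natDegree_mul (cyclotomic_ne_zero p ℚ) hq0
        rw [← hq] at this
        omega
      obtain ⟨c, rfl⟩ := natDegree_eq_zero.mp hdq
      have hco : ∀ b : ZMod p, P.coeff b.val = c := by
        intro b
        rw [hq, coeff_mul_C, cyclotomic_prime, finset_sum_coeff]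
        rw [Finset.sum_eq_single b.val]
        · simp
        · intro n _ hn
          rw [coeff_X_pow, if_neg (fun h => hn h.symm)]
        · intro h
          exact absurd (Finset.mem_range.mpr b.val_lt) h
      intro b
      rw [← hcoeff b, ← hcoeff 0, hco b, hco 0]
  -- f is constant; its sum is zero, so it is zero
  have hc : ∀ b : ZMod p, f b = f 0 := by
    intro b; exact_mod_cast key b
  have : (p : ℤ) * f 0 = 0 := by
    rw [← hsum]
    rw [Finset.sum_congr rfl (fun b _ => hc b)]
    simp [ZMod.card, mul_comm]
  have h0 : f 0 = 0 := by
    have hp0 : (p : ℤ) ≠ 0 := by exact_mod_cast hp.ne_zero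
    exact (mul_eq_zero.mp this).resolve_left hp0
  intro a; rw [hc a, h0]


open Finset in
theorem aux_count {d : ℕ} {α : Type*} [DecidableEq α] (M : Fin d → α) (a : α) :
    (List.ofFn M).count a = (univ.filter fun j => M j = a).card := by
  have h1 : List.count a (List.ofFn M) = Multiset.count a ((List.ofFn M : List α) : Multiset α) := by
    rw [Multiset.coe_count]
  rw [h1, ← Fin.univ_val_map, Multiset.count_map]
  have h2 : (Multiset.filter (fun b => a = M b) univ.val)
      = (Multiset.filter (fun j => M j = a) univ.val) :=
    Multiset.filter_congr (fun x _ => by constructor <;> (intro h; exact h.symm))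
  rw [h2, Finset.card_def, Finset.filter_val]

open Finset in
theorem aux_perm {d : ℕ} (K L : Fin d → ℕ)
    (h : ∀ a : ℕ, (univ.filter fun j => K j = a).card = (univ.filter fun j => L j = a).card) :
    ∃ σ : Equiv.Perm (Fin d), ∀ i, L i = K (σ i) := by
  have hperm : (List.ofFn K).Perm (List.ofFn L) := by
    rw [List.perm_iff_count]
    intro a; rw [aux_count, aux_count]; exact h a
  haveI : IsAntisymm ℕ (· ≤ ·) := ⟨fun a b h1 h2 => le_antisymm h1 h2⟩
  have hs : List.ofFn (K ∘ Tuple.sort K) = List.ofFn (L ∘ Tuple.sort L) := by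
    refine (fun h1 h2 h3 => List.Perm.eq_of_sortedLE h2 h3 h1) ?_ ?_ ?_
    · exact ((Tuple.sort K).ofFn_comp_perm K).trans
        (hperm.trans ((Tuple.sort L).ofFn_comp_perm L).symm)
    · exact List.sortedLE_ofFn_iff.mpr (Tuple.monotone_sort K)
    · exact List.sortedLE_ofFn_iff.mpr (Tuple.monotone_sort L)
  have hfun : K ∘ Tuple.sort K = L ∘ Tuple.sort L := List.ofFn_injective hs
  refine ⟨(Tuple.sort L)⁻¹.trans (Tuple.sort K), fun i => ?_⟩
  have := congrFun hfun ((Tuple.sort L)⁻¹ i)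
  simpa using this.symm



open Finset in
theorem aux_main {d p : ℕ} [NeZero p] (hp : p.Prime) (hd : 1 ≤ d)
    (k l : Fin d → ZMod p)
    (heq : ∑ j, Real.cos (2 * Real.pi * ((k j).val : ℝ) / p) =
           ∑ j, Real.cos (2 * Real.pi * ((l j).val : ℝ) / p)) :
    ∀ a : ZMod p,
      ((univ.filter fun j => k j = a).card + (univ.filter fun j => k j = -a).card : ℤ) =
      ((univ.filter fun j => l j = a).card + (univ.filter fun j => l j = -a).card : ℤ) := by
  set ζ : ℂ := Complex.exp (2 * Real.pi * Complex.I / p) with hζdef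
  have hζ : IsPrimitiveRoot ζ p := Complex.isPrimitiveRoot_exp p hp.ne_zero
  set e : ZMod p → ℂ := fun a => ζ ^ a.val with hedef
  have hpow : ∀ a : ZMod p, e a = Complex.exp ((a.val : ℂ) * (2 * Real.pi * Complex.I / p)) := by
    intro a; rw [hedef]; exact (Complex.exp_nat_mul _ _).symm
  have hneg : ∀ a : ZMod p,
      e (-a) = Complex.exp (-((a.val : ℂ) * (2 * Real.pi * Complex.I / p))) := by
    intro a
    by_cases h0 : a = 0
    · subst h0; simp [hedef]
    · have hlt : a.val < p := a.val_lt
      have hnv : (-a).val = p - a.val := by rw [ZMod.neg_val, if_neg h0]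
      have hmul : e (-a) * e a = 1 := by
        rw [hedef]; simp only
        rw [← pow_add, hnv, Nat.sub_add_cancel hlt.le]
        exact hζ.pow_eq_one
      have h1 : e (-a) = (e a)⁻¹ := eq_inv_of_mul_eq_one_left hmul
      rw [h1, hpow, ← Complex.exp_neg]
  -- each pair e a + e (-a) is twice a cosine
  have hcos : ∀ a : ZMod p,
      e a + e (-a) = 2 * (Real.cos (2 * Real.pi * (a.val : ℝ) / p) : ℂ) := by
    intro a
    rw [hpow, hneg, Complex.ofReal_cos, Complex.cos]
    push_cast
    ring_nf
  -- fiberwise counting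
  have hfib : ∀ (m : Fin d → ZMod p) (g : ZMod p → ℂ),
      ∑ j, g (m j) = ∑ a : ZMod p, ((univ.filter fun j => m j = a).card : ℂ) * g a := by
    intro m g
    rw [← Finset.sum_fiberwise' univ m g]
    refine Finset.sum_congr rfl fun a _ => ?_
    rw [Finset.sum_const, nsmul_eq_mul]
  -- the coefficient function
  set cnt : (Fin d → ZMod p) → ZMod p → ℤ :=
    fun m a => ((univ.filter fun j => m j = a).card : ℤ) with hcnt
  set f : ZMod p → ℤ := fun a => cnt k a + cnt k (-a) - cnt l a - cnt l (-a) with hf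
  have hsum : ∑ a : ZMod p, f a = 0 := by
    have htot : ∀ m : Fin d → ZMod p, ∑ a : ZMod p, cnt m a = d := by
      intro m
      have hn : ∑ a : ZMod p, (univ.filter fun j => m j = a).card = d := by
        rw [← Finset.card_eq_sum_card_fiberwise (f := m) (t := univ) (fun x _ => mem_univ _)]
        simp
      rw [hcnt]
      rw [← Nat.cast_sum, hn]
    have hnegsum : ∀ m : Fin d → ZMod p, ∑ a : ZMod p, cnt m (-a) = ∑ a : ZMod p, cnt m a :=
      fun m => Fintype.sum_equiv (Equiv.neg (ZMod p)) _ _ (fun a => rfl)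
    rw [hf]
    simp only [Finset.sum_sub_distrib, Finset.sum_add_distrib]
    rw [hnegsum k, hnegsum l, htot k, htot l]
    ring
  have hvan : ∑ a : ZMod p, (f a : ℂ) * ζ ^ (a.val) = 0 := by
    have hms : ∀ m : Fin d → ZMod p,
        ∑ a : ZMod p, ((cnt m a : ℂ) + (cnt m (-a) : ℂ)) * e a = ∑ j, (e (m j) + e (-(m j))) := by
      intro m
      rw [Finset.sum_add_distrib]
      simp only [add_mul]
      rw [Finset.sum_add_distrib]
      have h1 : ∑ a : ZMod p, (cnt m a : ℂ) * e a = ∑ j, e (m j) := (hfib m e).symm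
      have h2 : ∑ a : ZMod p, (cnt m (-a) : ℂ) * e a = ∑ j, e (-(m j)) :=
        calc ∑ a : ZMod p, (cnt m (-a) : ℂ) * e a
            = ∑ b : ZMod p, (cnt m b : ℂ) * e (-b) :=
              Fintype.sum_equiv (Equiv.neg (ZMod p)) _ _ (fun a => by simp)
          _ = ∑ j, e (-(m j)) := (hfib m (fun b => e (-b))).symm
      rw [h1, h2]
    have hsides : ∑ j, (e (k j) + e (-(k j))) = ∑ j, (e (l j) + e (-(l j))) := by
      simp only [hcos]
      rw [← Finset.mul_sum, ← Finset.mul_sum]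
      congr 1
      rw [← Complex.ofReal_sum, ← Complex.ofReal_sum]
      exact_mod_cast congrArg Complex.ofReal heq
    have : ∑ a : ZMod p, (f a : ℂ) * e a = 0 := by
      have expand : ∀ a : ZMod p, (f a : ℂ) * e a
          = ((cnt k a : ℂ) + (cnt k (-a) : ℂ)) * e a - ((cnt l a : ℂ) + (cnt l (-a) : ℂ)) * e a := by
        intro a; rw [hf]; push_cast; ring
      rw [Finset.sum_congr rfl (fun a _ => expand a), Finset.sum_sub_distrib, hms k, hms l,
        hsides, sub_self]
    exact this
  have hzero : ∀ a, f a = 0 := aux_indep hp hζ f hsum hvan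
  intro a
  have := hzero a
  rw [hf] at this
  simp only [hcnt] at this ⊢
  omega


/-- Eigenvalue multiplicities for the torus `ℤ_p^d`, `p > 4d` prime: if
`λ_k = λ_l` where `λ_k = (1/d)Σ_j cos(2πk_j/p)`, then `l` is obtained from `k` by a
permutation of the coordinates together with sign changes of coordinates. -/
theorem stmt16 {d p : ℕ} (hd : 1 ≤ d) (hp : p.Prime) (hpd : 4 * d < p)
    (k l : Fin d → ZMod p)
    (heq : (1 / (d : ℝ)) * ∑ j, Real.cos (2 * Real.pi * ((k j).val : ℝ) / p) =
           (1 / (d : ℝ)) * ∑ j, Real.cos (2 * Real.pi * ((l j).val : ℝ) / p)) :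
    ∃ σ : Equiv.Perm (Fin d), ∀ i, l i = k (σ i) ∨ l i = -k (σ i) := by
  haveI : NeZero p := ⟨hp.ne_zero⟩
  have hd0 : (1 / (d : ℝ)) ≠ 0 := by
    have : (d : ℝ) ≠ 0 := by exact_mod_cast (by omega : d ≠ 0)
    simp [this]
  have heq' : ∑ j, Real.cos (2 * Real.pi * ((k j).val : ℝ) / p) =
      ∑ j, Real.cos (2 * Real.pi * ((l j).val : ℝ) / p) := mul_left_cancel₀ hd0 heq
  have HC := aux_main hp hd k l heq'
  -- representative of the pair {a, -a}
  set rep : ZMod p → ZMod p := fun a => if a.val ≤ (-a).val then a else -a with hrep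
  have rep_mem : ∀ a, rep a = a ∨ rep a = -a := by
    intro a; rw [hrep]; dsimp only
    split
    · exact Or.inl rfl
    · exact Or.inr rfl
  have rep_neg : ∀ a, rep (-a) = rep a := by
    intro a
    by_cases h1 : a.val ≤ (-a).val
    · by_cases h2 : (-a).val ≤ a.val
      · have : a = -a := ZMod.val_injective p (le_antisymm h1 h2)
        rw [← this]
      · rw [hrep]; dsimp only
        rw [if_pos h1, if_neg (by simpa using h2), neg_neg]
    · have h2 : (-a).val ≤ a.val := le_of_not_ge h1
      rw [hrep]; dsimp only
      rw [if_neg h1, if_pos (by simpa using h2)]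
  have rep_rep : ∀ a, rep (rep a) = rep a := by
    intro a
    rcases rep_mem a with h | h
    · rw [h]; exact h
    · rw [h, rep_neg]; exact h
  set Kf : Fin d → ℕ := fun j => (rep (k j)).val with hKf
  set Lf : Fin d → ℕ := fun j => (rep (l j)).val with hLf
  have hcount : ∀ n : ℕ,
      (univ.filter fun j => Kf j = n).card = (univ.filter fun j => Lf j = n).card := by
    intro n
    by_cases hn : n < p
    · set b : ZMod p := (n : ZMod p) with hb
      have hbv : b.val = n := ZMod.val_cast_of_lt hn
      have htr : ∀ m : Fin d → ZMod p,
          (univ.filter fun j => (rep (m j)).val = n) = (univ.filter fun j => rep (m j) = b) := by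
        intro m
        refine Finset.filter_congr fun j _ => ?_
        constructor
        · intro h; exact ZMod.val_injective p (by rw [h, hbv])
        · intro h; rw [h, hbv]
      rw [hKf, hLf, htr k, htr l]
      by_cases hfix : rep b = b
      · have hset : ∀ m : Fin d → ZMod p,
            (univ.filter fun j => rep (m j) = b)
            = (univ.filter fun j => m j = b) ∪ (univ.filter fun j => m j = -b) := by
          intro m
          ext j
          simp only [Finset.mem_filter, Finset.mem_union, Finset.mem_univ, true_and]
          constructor
          · intro h
            rcases rep_mem (m j) with h' | h'
            · left; rw [← h, h']
            · right
              have : -(m j) = b := by rw [← h', h]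
              rw [← this, neg_neg]
          · rintro (h | h)
            · rw [h, hfix]
            · rw [h, rep_neg, hfix]
        rw [hset k, hset l]
        by_cases hbb : b = -b
        · have hsame : ∀ m : Fin d → ZMod p,
              (univ.filter fun j => m j = b) ∪ (univ.filter fun j => m j = -b)
              = (univ.filter fun j => m j = b) := by
            intro m
            have hbb' : (-b) = b := hbb.symm
            simp only [hbb', Finset.union_self]
          rw [hsame k, hsame l]
          have := HC b
          rw [← hbb] at this
          omega
        · have hdisj : ∀ m : Fin d → ZMod p,
              Disjoint (univ.filter fun j => m j = b) (univ.filter fun j => m j = -b) := by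
            intro m
            rw [Finset.disjoint_filter]
            intro j _ h1 h2
            exact hbb (h1.symm.trans h2)
          rw [Finset.card_union_of_disjoint (hdisj k), Finset.card_union_of_disjoint (hdisj l)]
          have := HC b
          omega
      · have hempty : ∀ m : Fin d → ZMod p,
            (univ.filter fun j => rep (m j) = b) = ∅ := by
          intro m
          rw [Finset.filter_eq_empty_iff]
          intro j _ h
          exact hfix (by rw [← h, rep_rep])
        rw [hempty k, hempty l]
    · have hempty : ∀ m : Fin d → ZMod p, (univ.filter fun j => (rep (m j)).val = n) = ∅ := by
        intro m
        rw [Finset.filter_eq_empty_iff]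
        intro j _ h
        exact hn (h ▸ (rep (m j)).val_lt)
      rw [hKf, hLf, hempty k, hempty l]
  obtain ⟨σ, hσ⟩ := aux_perm Kf Lf hcount
  refine ⟨σ, fun i => ?_⟩
  have hv : rep (l i) = rep (k (σ i)) := ZMod.val_injective p (hσ i)
  rcases rep_mem (l i) with h1 | h1 <;> rcases rep_mem (k (σ i)) with h2 | h2
  · left; rw [← h1, hv, h2]
  · right; rw [← h1, hv, h2]
  · right
    have : -(l i) = k (σ i) := by rw [← h1, hv, h2]
    rw [← this, neg_neg]
  · left
    have : -(l i) = -(k (σ i)) := by rw [← h1, hv, h2]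
    exact neg_injective this
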